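/- Let ψ₁ and ψ₂ be solutions of Hill's equation ψ'' + v(x)ψ = 0 with constant Wronskian W = ψ₁ψ₂' − ψ₂ψ₁', and let A, B, C ∈ ℝ with A·ψ₁² + 2B·ψ₁ψ₂ + C·ψ₂² > 0 on an interval I. Then ψ = √(Aψ₁² + 2Bψ₁ψ₂ + Cψ₂²) satisfies the Milne–Pinney equation ψ'' + v·ψ = σ/ψ³ on I, where σ = (AC − B²)·W². -/

import Mathlib

/-- Superposition rule for the Milne–Pinney equation: if `ψ₁, ψ₂` solve Hill's
equation with constant Wronskian `W`, and `Q = Aψ₁² + 2Bψ₁ψ₂ + Cψ₂² > 0` on `I`,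
then `ψ = √Q` satisfies `ψ'' + v ψ = σ/ψ³` with `σ = (AC − B²)W²`. -/
theorem milne_pinney_superposition
    (v ψ₁ ψ₁' ψ₂ ψ₂' : ℝ → ℝ) (I : Set ℝ) (hI : IsOpen I) (A B C W : ℝ)
    (hp1 : ∀ x ∈ I, HasDerivAt ψ₁ (ψ₁' x) x)
    (hp1' : ∀ x ∈ I, HasDerivAt ψ₁' (-(v x * ψ₁ x)) x)
    (hp2 : ∀ x ∈ I, HasDerivAt ψ₂ (ψ₂' x) x)
    (hp2' : ∀ x ∈ I, HasDerivAt ψ₂' (-(v x * ψ₂ x)) x)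
    (hW : ∀ x ∈ I, ψ₁ x * ψ₂' x - ψ₂ x * ψ₁' x = W)
    (hQ : ∀ x ∈ I, A * (ψ₁ x) ^ 2 + 2 * B * ψ₁ x * ψ₂ x + C * (ψ₂ x) ^ 2 > 0)
    (ψ : ℝ → ℝ)
    (hψ : ψ = fun x =>
      Real.sqrt (A * (ψ₁ x) ^ 2 + 2 * B * ψ₁ x * ψ₂ x + C * (ψ₂ x) ^ 2))
    (σ : ℝ) (hσ : σ = (A * C - B ^ 2) * W ^ 2) :
    ∀ x ∈ I, deriv (deriv ψ) x + v x * ψ x = σ / (ψ x) ^ 3 := by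
  set Q : ℝ → ℝ := fun x => A * (ψ₁ x) ^ 2 + 2 * B * ψ₁ x * ψ₂ x + C * (ψ₂ x) ^ 2 with hQdef
  set Q' : ℝ → ℝ := fun x =>
    2 * A * ψ₁ x * ψ₁' x + 2 * B * (ψ₁' x * ψ₂ x + ψ₁ x * ψ₂' x) + 2 * C * ψ₂ x * ψ₂' x
    with hQ'def
  set R : ℝ → ℝ := fun x => A * (ψ₁' x) ^ 2 + 2 * B * ψ₁' x * ψ₂' x + C * (ψ₂' x) ^ 2
    with hRdef
  have hQd : ∀ x ∈ I, HasDerivAt Q (Q' x) x := by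
    intro x hx
    have h1 := hp1 x hx; have h2 := hp2 x hx
    have h := (((h1.pow 2).const_mul A).add (((h1.const_mul (2 * B)).mul h2))).add
        ((h2.pow 2).const_mul C)
    refine h.congr_deriv ?_
    push_cast
    simp [hQ'def]
    ring
  have hQ'd : ∀ x ∈ I, HasDerivAt Q' (2 * R x - 2 * v x * Q x) x := by
    intro x hx
    have h1 := hp1 x hx; have h2 := hp2 x hx
    have h1' := hp1' x hx; have h2' := hp2' x hx
    have h := (((h1.const_mul (2 * A)).mul h1').add
        (((h1'.mul h2).add (h1.mul h2')).const_mul (2 * B))).add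
        ((h2.const_mul (2 * C)).mul h2')
    refine h.congr_deriv ?_
    simp [hRdef, hQdef]
    ring
  have hQpos : ∀ x ∈ I, 0 < Q x := hQ
  have hψd : ∀ x ∈ I, HasDerivAt ψ (Q' x / (2 * Real.sqrt (Q x))) x := by
    intro x hx
    rw [hψ]
    exact (hQd x hx).sqrt (ne_of_gt (hQpos x hx))
  set φ : ℝ → ℝ := fun x => Q' x / (2 * Real.sqrt (Q x)) with hφdef
  intro x hx
  have hsx : 0 < Real.sqrt (Q x) := Real.sqrt_pos.mpr (hQpos x hx)
  have hdψeq : deriv ψ =ᶠ[nhds x] φ := by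
    filter_upwards [hI.mem_nhds hx] with y hy
    exact (hψd y hy).deriv
  have hφd : HasDerivAt φ
      (((2 * R x - 2 * v x * Q x) * (2 * Real.sqrt (Q x))
        - Q' x * (2 * (Q' x / (2 * Real.sqrt (Q x))))) / (2 * Real.sqrt (Q x)) ^ 2) x := by
    have hsq : HasDerivAt (fun y => Real.sqrt (Q y)) (Q' x / (2 * Real.sqrt (Q x))) x :=
      (hQd x hx).sqrt (ne_of_gt (hQpos x hx))
    exact (hQ'd x hx).div (hsq.const_mul 2) (by positivity)
  have hd2 : deriv (deriv ψ) x
      = ((2 * R x - 2 * v x * Q x) * (2 * Real.sqrt (Q x))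
        - Q' x * (2 * (Q' x / (2 * Real.sqrt (Q x))))) / (2 * Real.sqrt (Q x)) ^ 2 := by
    rw [hdψeq.deriv_eq]
    exact hφd.deriv
  have hψx : ψ x = Real.sqrt (Q x) := by rw [hψ]
  have hs2 : Real.sqrt (Q x) ^ 2 = Q x := Real.sq_sqrt (hQpos x hx).le
  have key : Q x * R x - (Q' x / 2) ^ 2 = σ := by
    rw [hσ, ← hW x hx]
    simp only [hQdef, hQ'def, hRdef]
    ring
  rw [hd2, hψx]
  set s := Real.sqrt (Q x)
  have hsne : s ≠ 0 := ne_of_gt hsx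
  field_simp
  linear_combination 4 * key + (4 * R x + 4 * v x * s ^ 2) * hs2
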